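/- arXiv:1708.03663 — 6 statements merged into one kernel-verified Lean document; each statement's English description precedes it below -/
import Mathlib

section
/- Let K be a field that is complete with respect to a nontrivial nonarchimedean absolute value ‖·‖ and algebraically closed (for example, K = ℂ_p). Let ρ > 0 be a real number and let (r_n)_{n≥0} be a sequence in K with ‖r_n‖·ρ^n → 0 as n → ∞, so that F(w) := Σ_{n≥0} r_n w^n converges for every w ∈ K with ‖w‖ ≤ ρ. If there is a constant c ≥ 0 such that ‖F(w)‖ = c for every w ∈ K with ‖w‖ ≤ ρ, then ‖F(0)‖ ≥ ρ·‖r_1‖. (Equivalently, in valuation terms with ρ = p^{-m}: the function F has v(F(w)) constant on the closed disc of valuation-radius m, and then v(F(0)) − v(F'(0)) ≤ m, since F'(0) = r_1.) -/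
open Filter Finset IsUltrametricDist

private lemma aux_summable_pow {K : Type*} [NontriviallyNormedField K] [IsUltrametricDist K]
    [CompleteSpace K] {ρ : ℝ} {r : ℕ → K}
    (hconv : Tendsto (fun n => ‖r n‖ * ρ ^ n) atTop (nhds 0))
    {z : K} (hz : ‖z‖ ≤ ρ) : Summable fun n => r n * z ^ n := by
  apply NonarchimedeanAddGroup.summable_of_tendsto_cofinite_zero
  rw [Nat.cofinite_eq_atTop]
  apply squeeze_zero_norm _ hconv
  intro n
  rw [norm_mul, norm_pow]
  exact mul_le_mul_of_nonneg_left (pow_le_pow_left₀ (norm_nonneg z) hz n) (norm_nonneg _)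

private lemma aux_key {K : Type*} [NontriviallyNormedField K] [IsUltrametricDist K]
    [CompleteSpace K] [IsAlgClosed K] {ρ : ℝ} (hρ : 0 < ρ) {r : ℕ → K}
    (hconv : Tendsto (fun n => ‖r n‖ * ρ ^ n) atTop (nhds 0))
    {c : ℝ} (hc : ∀ w : K, ‖w‖ ≤ ρ → ‖∑' n : ℕ, r n * w ^ n‖ = c)
    {w : K} (hw : ‖w‖ ≤ ρ) (hw0 : 0 < ‖w‖) (hr1 : r 1 ≠ 0) :
    ‖w‖ * ‖r 1‖ ≤ c := by
  classical
  set ε := ‖w‖ * ‖r 1‖ with hε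
  have hε0 : 0 < ε := mul_pos hw0 (norm_pos_iff.mpr hr1)
  obtain ⟨N₀, hN₀⟩ := Metric.tendsto_atTop.mp hconv (ε / 2) (by positivity)
  have hbound : ∀ n, N₀ ≤ n → ‖r n‖ * ρ ^ n ≤ ε / 2 := by
    intro n hn
    have := hN₀ n hn
    rw [Real.dist_eq, sub_zero, abs_of_nonneg (by positivity)] at this
    exact this.le
  -- choose N ≥ max N₀ 2 with ‖(N : K)‖ = 1
  obtain ⟨N, hN2, hNN₀, hNnorm⟩ : ∃ N : ℕ, 2 ≤ N ∧ N₀ ≤ N ∧ ‖(N : K)‖ = 1 := by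
    set M := max N₀ 2 with hM
    by_cases h : ‖(M : K)‖ = 1
    · exact ⟨M, le_max_right _ _, le_max_left _ _, h⟩
    · have hMlt : ‖(M : K)‖ < 1 := lt_of_le_of_ne (norm_natCast_le_one K M) h
      have hone : (1 : ℝ) ≤ max ‖(M : K) + 1‖ ‖(M : K)‖ := by
        calc (1 : ℝ) = ‖((M : K) + 1) + (-(M : K))‖ := by simp
        _ ≤ max ‖(M : K) + 1‖ ‖-(M : K)‖ := norm_add_le_max _ _
        _ = max ‖(M : K) + 1‖ ‖(M : K)‖ := by rw [norm_neg]
      have h1 : (1 : ℝ) ≤ ‖(M : K) + 1‖ := by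
        rcases le_max_iff.mp hone with h' | h'
        · exact h'
        · linarith
      refine ⟨M + 1, by omega, by omega, ?_⟩
      push_cast
      exact le_antisymm (by simpa using norm_natCast_le_one K (M + 1)) h1
  have hNne : ((N : K)) ≠ 0 := by
    intro h
    rw [h, norm_zero] at hNnorm
    norm_num at hNnorm
  haveI : NeZero ((N : K)) := ⟨hNne⟩
  obtain ⟨ζ, hζ⟩ := HasEnoughRootsOfUnity.exists_primitiveRoot K N
  have hζ1 : ζ ^ N = 1 := hζ.pow_eq_one
  have hζ0 : ζ ≠ 0 := by
    intro h
    rw [h, zero_pow (by omega : N ≠ 0)] at hζ1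
    exact zero_ne_one hζ1
  have hζnorm : ‖ζ‖ = 1 := by
    have hp : ‖ζ‖ ^ N = 1 := by rw [← norm_pow, hζ1, norm_one]
    by_contra hne
    rcases lt_or_gt_of_ne hne with hlt | hgt
    · have := pow_lt_one₀ (norm_nonneg ζ) hlt (by omega : N ≠ 0)
      rw [hp] at this; exact lt_irrefl _ this
    · have := one_lt_pow₀ hgt (by omega : N ≠ 0)
      rw [hp] at this; exact lt_irrefl _ this
  have hζi : ∀ i : ℕ, ‖ζ ^ i * w‖ = ‖w‖ := by
    intro i; rw [norm_mul, norm_pow, hζnorm, one_pow, one_mul]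
  have hsum : ∀ i : ℕ, Summable fun n => r n * (ζ ^ i * w) ^ n := by
    intro i; exact aux_summable_pow hconv (by rw [hζi]; exact hw)
  have hζinorm : ‖ζ⁻¹‖ = 1 := by rw [norm_inv, hζnorm, inv_one]
  set S := ∑ i ∈ Finset.range N, (ζ⁻¹) ^ i * ∑' n, r n * (ζ ^ i * w) ^ n with hS
  have hc0 : 0 ≤ c := (hc 0 (by simp [hρ.le])) ▸ norm_nonneg _
  have hSle : ‖S‖ ≤ c := by
    refine norm_sum_le_of_forall_le_of_nonneg hc0 ?_
    intro i _
    rw [norm_mul, norm_pow, hζinorm, one_pow, one_mul, hc _ (by rw [hζi]; exact hw)]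
  -- rearrange
  have hcongr : ∀ n : ℕ, (∑ i ∈ Finset.range N, (ζ⁻¹) ^ i * (r n * (ζ ^ i * w) ^ n))
      = if ζ ^ n = ζ then (N : K) * (r n * w ^ n) else 0 := by
    intro n
    have hterm : ∀ i, (ζ⁻¹) ^ i * (r n * (ζ ^ i * w) ^ n) = (ζ ^ n * ζ⁻¹) ^ i * (r n * w ^ n) := by
      intro i
      rw [mul_pow (ζ ^ i) w n, mul_pow (ζ ^ n) (ζ⁻¹) i, ← pow_mul, ← pow_mul, mul_comm n i]
      ring
    rw [Finset.sum_congr rfl fun i _ => hterm i, ← Finset.sum_mul]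
    by_cases hn : ζ ^ n = ζ
    · rw [if_pos hn]
      have hu : ζ ^ n * ζ⁻¹ = 1 := by rw [hn, mul_inv_cancel₀ hζ0]
      simp [hu]
    · rw [if_neg hn]
      have hu1 : ζ ^ n * ζ⁻¹ ≠ 1 := fun h => hn ((mul_inv_eq_one₀ hζ0).mp h)
      have huN : (ζ ^ n * ζ⁻¹) ^ N = 1 := by
        rw [mul_pow, ← pow_mul, mul_comm n N, pow_mul, hζ1, one_pow, inv_pow, hζ1, inv_one,
          one_mul]
      rw [geom_sum_eq hu1, huN, sub_self, zero_div, zero_mul]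
  have hhsum : Summable fun n => ∑ i ∈ Finset.range N, (ζ⁻¹) ^ i * (r n * (ζ ^ i * w) ^ n) :=
    summable_sum fun i _ => (hsum i).mul_left _
  have hfun : (fun n => ∑ i ∈ Finset.range N, (ζ⁻¹) ^ i * (r n * (ζ ^ i * w) ^ n))
      = fun n => if ζ ^ n = ζ then (N : K) * (r n * w ^ n) else 0 := funext hcongr
  have hgsum : Summable (fun n => if ζ ^ n = ζ then (N : K) * (r n * w ^ n) else 0) :=
    hfun ▸ hhsum
  have hrearr : S = ∑' n, (if ζ ^ n = ζ then (N : K) * (r n * w ^ n) else 0) := by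
    rw [hS]
    have hmul : ∀ i ∈ Finset.range N, (ζ⁻¹) ^ i * ∑' n, r n * (ζ ^ i * w) ^ n
        = ∑' n, (ζ⁻¹) ^ i * (r n * (ζ ^ i * w) ^ n) := fun i _ => (tsum_mul_left).symm
    rw [Finset.sum_congr rfl hmul, ← Summable.tsum_finsetSum fun i _ => (hsum i).mul_left ((ζ⁻¹) ^ i)]
    exact tsum_congr hcongr
  have hsplit := Summable.tsum_eq_add_tsum_ite hgsum 1
  set T := ∑' n, (if n = 1 then 0 else if ζ ^ n = ζ then (N : K) * (r n * w ^ n) else 0) with hT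
  have hSval : S = (N : K) * (r 1 * w) + T := by
    rw [hrearr, hsplit]
    simp [pow_one]
  have hTle : ‖T‖ ≤ ε / 2 := by
    refine norm_tsum_le_of_forall_le_of_nonneg (by positivity) ?_
    intro n
    by_cases h1 : n = 1
    · rw [if_pos h1, norm_zero]; positivity
    rw [if_neg h1]
    by_cases h2 : ζ ^ n = ζ
    · rw [if_pos h2]
      have hn0 : n ≠ 0 := by
        rintro rfl
        rw [pow_zero] at h2
        have h3 : ζ ^ 1 = 1 := by rw [pow_one, ← h2]
        have := Nat.le_of_dvd one_pos ((hζ.pow_eq_one_iff_dvd 1).mp h3)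
        omega
      have hdvd : N ∣ n - 1 := by
        apply (hζ.pow_eq_one_iff_dvd _).mp
        have h3 : ζ ^ (n - 1) * ζ = 1 * ζ := by
          rw [one_mul, ← pow_succ, Nat.sub_add_cancel (by omega), h2]
        exact mul_right_cancel₀ hζ0 h3
      have hnN : N₀ ≤ n := by
        have hne : n - 1 ≠ 0 := by omega
        have := Nat.le_of_dvd (by omega) hdvd
        omega
      calc ‖(N : K) * (r n * w ^ n)‖ = ‖r n‖ * ‖w‖ ^ n := by
            rw [norm_mul, hNnorm, one_mul, norm_mul, norm_pow]
        _ ≤ ‖r n‖ * ρ ^ n := by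
            exact mul_le_mul_of_nonneg_left (pow_le_pow_left₀ (norm_nonneg w) hw n) (norm_nonneg _)
        _ ≤ ε / 2 := hbound n hnN
    · rw [if_neg h2, norm_zero]; positivity
  have hε_eq : ε = ‖(N : K) * (r 1 * w)‖ := by
    rw [norm_mul, hNnorm, one_mul, norm_mul, mul_comm]
  have hmax : ε ≤ max ‖S‖ ‖T‖ := by
    rw [hε_eq]
    have h4 : (N : K) * (r 1 * w) = S + (-T) := by rw [hSval]; ring
    rw [h4]
    exact (norm_add_le_max _ _).trans (by rw [norm_neg])
  rcases le_max_iff.mp hmax with h' | h'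
  · exact hε ▸ h'.trans hSle
  · linarith

/-- Let `K` be a complete, algebraically closed field with a nontrivial
nonarchimedean (multiplicative) absolute value. If `F(w) = ∑ rₙ wⁿ` converges on the closed
disc `‖w‖ ≤ ρ` (because `‖rₙ‖ ρⁿ → 0`) and `‖F(w)‖` is constant (equal to some `c ≥ 0`) on
that disc, then `‖F(0)‖ ≥ ρ ‖r₁‖`. -/
theorem constant_norm_bounds_first_coeff
    {K : Type*} [NontriviallyNormedField K] [IsUltrametricDist K] [CompleteSpace K]
    [IsAlgClosed K]
    (ρ : ℝ) (hρ : 0 < ρ) (r : ℕ → K)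
    (hconv : Filter.Tendsto (fun n => ‖r n‖ * ρ ^ n) Filter.atTop (nhds 0))
    (hc : ∃ c : ℝ, 0 ≤ c ∧ ∀ w : K, ‖w‖ ≤ ρ → ‖∑' n : ℕ, r n * w ^ n‖ = c) :
    ρ * ‖r 1‖ ≤ ‖∑' n : ℕ, r n * (0 : K) ^ n‖ := by
  obtain ⟨c, hc0, hc⟩ := hc
  by_cases hr1 : r 1 = 0
  · rw [hr1, norm_zero, mul_zero]
    exact norm_nonneg _
  have hF0 : ‖∑' n : ℕ, r n * (0 : K) ^ n‖ = c := hc 0 (by simp [hρ.le])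
  rw [hF0]
  refine le_of_forall_pos_le_add ?_
  intro ε hε
  set B : ℝ := 1 + ε / (c + 1) with hB
  have hB1 : 1 < B := by
    rw [hB]
    have : 0 < ε / (c + 1) := by positivity
    linarith
  obtain ⟨x, hx⟩ := NontriviallyNormedField.non_trivial (α := K)
  obtain ⟨k, hk⟩ := pow_unbounded_of_one_lt ‖x‖ hB1
  have hk' : ‖x‖ < B ^ (k + 1) := hk.trans_le (by
    have := pow_le_pow_right₀ hB1.le (Nat.le_succ k)
    exact this)
  obtain ⟨y, hy⟩ := IsAlgClosed.exists_pow_nat_eq x (Nat.succ_pos k)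
  have hynorm : ‖y‖ ^ (k + 1) = ‖x‖ := by rw [← norm_pow, hy]
  have hy1 : 1 < ‖y‖ := by
    by_contra h
    push_neg at h
    have := pow_le_one₀ (norm_nonneg y) h (n := k + 1)
    rw [hynorm] at this
    linarith
  have hyB : ‖y‖ ≤ B := by
    by_contra h
    push_neg at h
    have := pow_lt_pow_left₀ h (le_of_lt (lt_trans one_pos hB1)) (by omega : k + 1 ≠ 0)
    rw [hynorm] at this
    linarith
  obtain ⟨m, hm1, hm2⟩ := exists_mem_Ioc_zpow hρ hy1
  have hy0 : y ≠ 0 := by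
    intro h
    rw [h, norm_zero] at hy1
    linarith
  set w : K := y ^ m with hwdef
  have hwnorm : ‖w‖ = ‖y‖ ^ m := norm_zpow y m
  have hw0 : 0 < ‖w‖ := by
    rw [hwnorm]
    exact zpow_pos (by linarith) m
  have hwle : ‖w‖ ≤ ρ := by rw [hwnorm]; exact hm1.le
  have hkey : ‖w‖ * ‖r 1‖ ≤ c := aux_key hρ hconv hc hwle hw0 hr1
  have hρle : ρ ≤ ‖y‖ * ‖w‖ := by
    rw [hwnorm, mul_comm, ← zpow_add_one₀ (by linarith : ‖y‖ ≠ 0)]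
    exact hm2
  have h5 : ρ * ‖r 1‖ ≤ ‖y‖ * (‖w‖ * ‖r 1‖) := by
    have := mul_le_mul_of_nonneg_right hρle (norm_nonneg (r 1))
    linarith [this, mul_assoc ‖y‖ ‖w‖ ‖r 1‖]
  have h6 : ‖y‖ * (‖w‖ * ‖r 1‖) ≤ B * c := by
    apply mul_le_mul hyB hkey (by positivity) (by linarith)
  have h7 : B * c ≤ c + ε := by
    rw [hB]
    have hc1 : 0 < c + 1 := by linarith
    have : ε / (c + 1) * c ≤ ε := by
      rw [div_mul_eq_mul_div, div_le_iff₀ hc1]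
      nlinarith
    nlinarith
  linarith
end

section
/- Assume that h satisfies condition (★), i.e. (⌈(p−3)h⌉ − 1)/(3(p−1)) ≥ 1. Then for every pair of integers k and s the set X_{k,s,h} is nonempty: there exists an integer k' with k' ≡ k (mod p−1), with k'−1 ≢ s (mod p+1) and k'−1 ≢ −s (mod p+1), and with ⌊(k'−2)/(p−1)⌋ < h < (k'−2)/2. -/
/-- **Proposition 7.4(a).** Let `p > 3` be prime and let `h > 0` satisfy
condition (★): `(⌈(p−3)h⌉ − 1)/(3(p−1)) ≥ 1`. Then for all integers `k, s` the set
`X_{k,s,h}` is nonempty: there is an integer `k'` with `k' ≡ k (mod p−1)`,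
`k'−1 ≢ ±s (mod p+1)`, and `⌊(k'−2)/(p−1)⌋ < h < (k'−2)/2`. -/
theorem X_nonempty (p : ℕ) (hp : p.Prime) (hp3 : 3 < p) (h : ℝ) (hh : 0 < h)
    (hstar : 1 ≤ ((⌈((p : ℝ) - 3) * h⌉ : ℝ) - 1) / (3 * ((p : ℝ) - 1)))
    (k s : ℤ) :
    ∃ k' : ℤ, Int.ModEq ((p : ℤ) - 1) k' k ∧
      ¬ Int.ModEq ((p : ℤ) + 1) (k' - 1) s ∧
      ¬ Int.ModEq ((p : ℤ) + 1) (k' - 1) (-s) ∧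
      ((⌊((k' : ℝ) - 2) / ((p : ℝ) - 1)⌋ : ℝ) < h ∧ h < ((k' : ℝ) - 2) / 2) := by
  have hP : (3:ℤ) < (p:ℤ) := by exact_mod_cast hp3
  have hPr : (3:ℝ) < (p:ℝ) := by exact_mod_cast hp3
  have hq : (0:ℝ) < (p:ℝ) - 1 := by linarith
  -- condition (★) gives 3(p-1) < (p-3)h
  have hA : 3 * ((p:ℝ) - 1) ≤ (⌈((p:ℝ) - 3) * h⌉ : ℝ) - 1 := by
    rw [le_div_iff₀ (by linarith : (0:ℝ) < 3 * ((p:ℝ) - 1))] at hstar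
    linarith
  have hB : ((⌈((p:ℝ) - 3) * h⌉ : ℝ) - 1) < ((p:ℝ) - 3) * h := by
    have := Int.ceil_lt_add_one (((p:ℝ) - 3) * h); linarith
  have hC : 3 * ((p:ℝ) - 1) < ((p:ℝ) - 3) * h := lt_of_le_of_lt hA hB
  have hceil : h ≤ (⌈h⌉ : ℝ) := Int.le_ceil h
  have hkey : 2 * h + 3 * ((p:ℝ) - 1) < ((p:ℝ) - 1) * (⌈h⌉ : ℝ) := by nlinarith
  set m : ℤ := ⌊(2 * h + 2 - (k:ℝ)) / ((p:ℝ) - 1)⌋ with hm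
  have hmlow : 2 * h + 2 - (k:ℝ) < ((m:ℝ) + 1) * ((p:ℝ) - 1) := by
    have h1 := Int.lt_floor_add_one ((2 * h + 2 - (k:ℝ)) / ((p:ℝ) - 1))
    rw [div_lt_iff₀ hq] at h1
    push_cast at h1 ⊢
    linarith
  have hmhigh : (m:ℝ) * ((p:ℝ) - 1) ≤ 2 * h + 2 - (k:ℝ) := by
    have h1 := Int.floor_le ((2 * h + 2 - (k:ℝ)) / ((p:ℝ) - 1))
    rw [le_div_iff₀ hq] at h1
    exact h1
  -- the candidates are K j := k + (m+1+j)*(p-1) for j = 0,1,2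
  have hmod : ∀ j : ℤ, Int.ModEq ((p:ℤ) - 1) (k + (m + 1 + j) * ((p:ℤ) - 1)) k := by
    intro j
    exact Int.modEq_iff_dvd.mpr ⟨-(m + 1 + j), by ring⟩
  have hlow : ∀ j : ℤ, 0 ≤ j →
      2 * h < ((k + (m + 1 + j) * ((p:ℤ) - 1) : ℤ) : ℝ) - 2 := by
    intro j hj
    have hj' : (0:ℝ) ≤ (j:ℝ) := by exact_mod_cast hj
    push_cast
    nlinarith [mul_nonneg hj' hq.le]
  have hhigh : ∀ j : ℤ, j ≤ 2 →
      ((k + (m + 1 + j) * ((p:ℤ) - 1) : ℤ) : ℝ) - 2 < ((p:ℝ) - 1) * (⌈h⌉ : ℝ) := by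
    intro j hj
    have hj' : (j:ℝ) ≤ 2 := by exact_mod_cast hj
    push_cast
    nlinarith [mul_nonneg (by linarith : (0:ℝ) ≤ 2 - (j:ℝ)) hq.le]
  have hconds : ∀ j : ℤ, 0 ≤ j → j ≤ 2 →
      ((⌊(((k + (m + 1 + j) * ((p:ℤ) - 1) : ℤ) : ℝ) - 2) / ((p:ℝ) - 1)⌋ : ℝ) < h ∧
        h < (((k + (m + 1 + j) * ((p:ℤ) - 1) : ℤ) : ℝ) - 2) / 2) := by
    intro j hj0 hj2
    constructor
    · have hx : (((k + (m + 1 + j) * ((p:ℤ) - 1) : ℤ) : ℝ) - 2) / ((p:ℝ) - 1)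
          < (⌈h⌉ : ℝ) := by
        rw [div_lt_iff₀ hq]
        have := hhigh j hj2
        linarith [this, mul_comm ((p:ℝ) - 1) ((⌈h⌉:ℝ))]
      have hfl : ⌊(((k + (m + 1 + j) * ((p:ℤ) - 1) : ℤ) : ℝ) - 2) / ((p:ℝ) - 1)⌋ < ⌈h⌉ :=
        Int.floor_lt.mpr hx
      have hfl' : ⌊(((k + (m + 1 + j) * ((p:ℤ) - 1) : ℤ) : ℝ) - 2) / ((p:ℝ) - 1)⌋ ≤ ⌈h⌉ - 1 := by
        omega
      have hfl'' : ((⌊(((k + (m + 1 + j) * ((p:ℤ) - 1) : ℤ) : ℝ) - 2) / ((p:ℝ) - 1)⌋ : ℝ))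
          ≤ (⌈h⌉ : ℝ) - 1 := by exact_mod_cast hfl'
      have := Int.ceil_lt_add_one h
      linarith
    · have := hlow j hj0
      linarith
  -- pigeonhole: one of j = 0,1,2 avoids both residues mod p+1
  have pick : ∃ j : ℤ, 0 ≤ j ∧ j ≤ 2 ∧
      ¬ Int.ModEq ((p:ℤ) + 1) (k + (m + 1 + j) * ((p:ℤ) - 1) - 1) s ∧
      ¬ Int.ModEq ((p:ℤ) + 1) (k + (m + 1 + j) * ((p:ℤ) - 1) - 1) (-s) := by
    by_contra hc
    push_neg at hc
    have H : ∀ j : ℤ, 0 ≤ j → j ≤ 2 →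
        Int.ModEq ((p:ℤ) + 1) (k + (m + 1 + j) * ((p:ℤ) - 1) - 1) s ∨
        Int.ModEq ((p:ℤ) + 1) (k + (m + 1 + j) * ((p:ℤ) - 1) - 1) (-s) := by
      intro j h0 h2
      by_cases hM : Int.ModEq ((p:ℤ) + 1) (k + (m + 1 + j) * ((p:ℤ) - 1) - 1) s
      · exact Or.inl hM
      · exact Or.inr (hc j h0 h2 hM)
    have no1 : ¬ ((p:ℤ) + 1) ∣ ((p:ℤ) - 1) := by
      intro hdvd
      have h2 : ((p:ℤ) + 1) ∣ 2 := by
        have hd := dvd_sub (dvd_refl ((p:ℤ) + 1)) hdvd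
        have e : (p:ℤ) + 1 - ((p:ℤ) - 1) = 2 := by ring
        rwa [e] at hd
      have := Int.le_of_dvd (by norm_num) h2
      omega
    have no2 : ¬ ((p:ℤ) + 1) ∣ 2 * ((p:ℤ) - 1) := by
      intro hdvd
      have h4 : ((p:ℤ) + 1) ∣ 4 := by
        have hd := dvd_sub (Dvd.dvd.mul_left (dvd_refl ((p:ℤ) + 1)) 2) hdvd
        have e : 2 * ((p:ℤ) + 1) - 2 * ((p:ℤ) - 1) = 4 := by ring
        rwa [e] at hd
      have := Int.le_of_dvd (by norm_num) h4
      omega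
    have H0 := H 0 (by norm_num) (by norm_num)
    have H1 := H 1 (by norm_num) (by norm_num)
    have H2 := H 2 (by norm_num) (by norm_num)
    rcases H0 with h0 | h0 <;> rcases H1 with h1 | h1 <;> rcases H2 with h2 | h2
    · exact no1 (by have := (h0.trans h1.symm).dvd; convert this using 1; ring)
    · exact no1 (by have := (h0.trans h1.symm).dvd; convert this using 1; ring)
    · exact no2 (by have := (h0.trans h2.symm).dvd; convert this using 1; ring)
    · exact no1 (by have := (h1.trans h2.symm).dvd; convert this using 1; ring)
    · exact no1 (by have := (h1.trans h2.symm).dvd; convert this using 1; ring)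
    · exact no2 (by have := (h0.trans h2.symm).dvd; convert this using 1; ring)
    · exact no1 (by have := (h0.trans h1.symm).dvd; convert this using 1; ring)
    · exact no1 (by have := (h0.trans h1.symm).dvd; convert this using 1; ring)
  obtain ⟨j, hj0, hj2, hns, hnns⟩ := pick
  exact ⟨k + (m + 1 + j) * ((p:ℤ) - 1), hmod j, hns, hnns, hconds j hj0 hj2⟩
end

section
/- For all integers k and s and every real number h > 0: either X_{k,s,h} is empty, or there exists k' ∈ X_{k,s,h} such that p^{⌊m_p(h)⌋} divides k' − k (i.e. v_p(k'−k) ≥ ⌊m_p(h)⌋). -/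
open Real

/-- The set `X_{k,s,h}` of integers `k'` such that (i) `k' ≡ k (mod p−1)`,
(ii) `k'−1 ≢ ±s (mod p+1)`, and (iii) `⌊(k'−2)/(p−1)⌋ < h < (k'−2)/2`. -/
def Xset (p : ℕ) (k s : ℤ) (h : ℝ) : Set ℤ :=
  {k' : ℤ | Int.ModEq ((p : ℤ) - 1) k' k ∧
    ¬ Int.ModEq ((p : ℤ) + 1) (k' - 1) s ∧
    ¬ Int.ModEq ((p : ℤ) + 1) (k' - 1) (-s) ∧
    ((⌊((k' : ℝ) - 2) / ((p : ℝ) - 1)⌋ : ℝ) < h ∧ h < ((k' : ℝ) - 2) / 2)}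

/-- `m_p(h) = log_p((⌈(p−3)h⌉ − 1)/(3(p−1)))` if condition (★) holds, and `0` otherwise. -/
noncomputable def mp (p : ℕ) (h : ℝ) : ℝ :=
  if 1 ≤ ((⌈((p : ℝ) - 3) * h⌉ : ℝ) - 1) / (3 * ((p : ℝ) - 1)) then
    Real.logb p (((⌈((p : ℝ) - 3) * h⌉ : ℝ) - 1) / (3 * ((p : ℝ) - 1)))
  else 0

set_option maxHeartbeats 1000000 in
/-- **Proposition 7.4(b).** Let `p > 3` be prime. For all integers `k, s` and
every real `h > 0`: either `X_{k,s,h}` is empty, or it contains a `k'` with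
`p^⌊m_p(h)⌋ ∣ (k' − k)`, i.e. `v_p(k'−k) ≥ ⌊m_p(h)⌋`. -/
theorem X_empty_or_deep_congruence (p : ℕ) (hp : p.Prime) (hp3 : 3 < p)
    (k s : ℤ) (h : ℝ) (hh : 0 < h) :
    Xset p k s h = ∅ ∨
      ∃ k' ∈ Xset p k s h, (p : ℤ) ^ (⌊mp p h⌋.toNat) ∣ (k' - k) := by
  by_cases hstar : (1:ℝ) ≤ ((⌈((p : ℝ) - 3) * h⌉ : ℝ) - 1) / (3 * ((p : ℝ) - 1))
  · right
    have hp4 : (4:ℕ) ≤ p := hp3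
    have hP4 : (4:ℝ) ≤ (p:ℝ) := by exact_mod_cast hp4
    have h1P : (1:ℝ) < (p:ℝ) := by linarith
    have hP1 : (0:ℝ) < (p:ℝ) - 1 := by linarith
    set r : ℝ := ((⌈((p : ℝ) - 3) * h⌉ : ℝ) - 1) / (3 * ((p : ℝ) - 1)) with hrdef
    have hr1 : (1:ℝ) ≤ r := hstar
    have hr0 : (0:ℝ) < r := by linarith
    have hmp : mp p h = Real.logb p r := by unfold mp; rw [if_pos hstar]
    set N : ℕ := (⌊mp p h⌋).toNat with hNdef
    have hlog0 : 0 ≤ Real.logb p r := Real.logb_nonneg h1P hr1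
    have hfl : 0 ≤ ⌊mp p h⌋ := Int.floor_nonneg.mpr (by rw [hmp]; exact hlog0)
    have hNle : (N:ℝ) ≤ Real.logb p r := by
      rw [← hmp]
      have h2 : ((N:ℤ):ℝ) = ((⌊mp p h⌋ : ℤ):ℝ) := by
        rw [hNdef, Int.toNat_of_nonneg hfl]
      push_cast at h2
      rw [h2]
      exact Int.floor_le _
    have hpow_le : ((p:ℝ))^N ≤ r := by
      have h1 : (p:ℝ) ^ (N:ℝ) ≤ (p:ℝ) ^ (Real.logb p r) :=
        (Real.rpow_le_rpow_left_iff h1P).mpr hNle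
      rwa [Real.rpow_natCast, Real.rpow_logb (by linarith) h1P.ne' hr0] at h1
    have hkey : 3*((p:ℝ)-1)*((p:ℝ))^N ≤ (⌈((p : ℝ) - 3) * h⌉ : ℝ) - 1 := by
      rw [hrdef] at hpow_le
      have h1 := (le_div_iff₀ (by positivity : (0:ℝ) < 3*((p:ℝ)-1))).mp hpow_le
      linarith
    have hceil : (⌈((p : ℝ) - 3) * h⌉ : ℝ) < ((p:ℝ)-3)*h + 1 := Int.ceil_lt_add_one _
    set q : ℤ := ((p:ℤ)-1) * (p:ℤ)^N with hqdef
    have hqcast : ((q:ℤ):ℝ) = ((p:ℝ)-1)*((p:ℝ))^N := by rw [hqdef]; push_cast; ring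
    have hq0 : (0:ℝ) < ((q:ℤ):ℝ) := by rw [hqcast]; positivity
    have h3q : 3*((q:ℤ):ℝ) < ((p:ℝ)-3)*h := by rw [hqcast]; linarith
    set t₀ : ℤ := ⌊(2*h + 2 - (k:ℝ))/((q:ℤ):ℝ)⌋ + 1 with ht₀def
    have hlow : 2*h + 2 < (k:ℝ) + ((q:ℤ):ℝ)*((t₀:ℤ):ℝ) := by
      have h1 : (2*h + 2 - (k:ℝ))/((q:ℤ):ℝ) < ((t₀:ℤ):ℝ) := by
        rw [ht₀def]; push_cast
        exact Int.lt_floor_add_one _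
      have h2 := (div_lt_iff₀ hq0).mp h1
      nlinarith
    have hhigh : (k:ℝ) + ((q:ℤ):ℝ)*((t₀:ℤ):ℝ) ≤ 2*h + 2 + ((q:ℤ):ℝ) := by
      have h1 : ((t₀:ℤ):ℝ) - 1 ≤ (2*h + 2 - (k:ℝ))/((q:ℤ):ℝ) := by
        rw [ht₀def]; push_cast
        linarith [Int.floor_le ((2*h + 2 - (k:ℝ))/((q:ℤ):ℝ))]
      have h2 := (le_div_iff₀ hq0).mp h1
      nlinarith
    set K : ℤ → ℤ := fun i => k + q*(t₀ + i) with hKdef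
    have hnd : ∀ d : ℤ, d = 1 ∨ d = 2 → ¬ ((p:ℤ)+1 ∣ q*d) := by
      intro d hd hdvd
      have hpm : (p:ℤ) ≡ -1 [ZMOD (p:ℤ)+1] := Int.modEq_iff_dvd.mpr ⟨-1, by ring⟩
      have hqd : ((p:ℤ)-1) * (p:ℤ)^N * d ≡ (-1-1) * (-1)^N * d [ZMOD (p:ℤ)+1] :=
        ((hpm.sub_right 1).mul (hpm.pow N)).mul_right d
      rw [hqdef] at hdvd
      have hdvd2 : ((p:ℤ)+1) ∣ (-1-1) * (-1:ℤ)^N * d := by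
        have h1 := hqd.dvd
        have h2 : (-1-1) * (-1:ℤ)^N * d =
            ((-1-1) * (-1:ℤ)^N * d - ((p:ℤ)-1) * (p:ℤ)^N * d) + ((p:ℤ)-1) * (p:ℤ)^N * d := by
          ring
        rw [h2]; exact dvd_add h1 hdvd
      have hp4' : (4:ℤ) ≤ (p:ℤ) := by exact_mod_cast hp4
      have h2d : ((p:ℤ)+1) ∣ 2*d := by
        rcases Nat.even_or_odd N with hN | hN
        · rw [hN.neg_one_pow] at hdvd2
          have h3 : (2:ℤ)*d = -((-1-1) * 1 * d) := by ring
          rw [h3]; exact dvd_neg.mpr hdvd2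
        · rw [hN.neg_one_pow] at hdvd2
          have h3 : (2:ℤ)*d = (-1-1) * (-1) * d := by ring
          rw [h3]; exact hdvd2
      have h2dle : (0:ℤ) < 2*d := by rcases hd with rfl | rfl <;> norm_num
      have h4 := Int.le_of_dvd h2dle h2d
      rcases hd with rfl | rfl <;> omega
    have hpair : ∀ i j c : ℤ, i < j → j - i ≤ 2 →
        Int.ModEq ((p:ℤ)+1) (K i - 1) c → Int.ModEq ((p:ℤ)+1) (K j - 1) c → False := by
      intro i j c hij hle h1 h2
      have h3 : (p:ℤ)+1 ∣ q*(j-i) := by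
        have h4 := (h1.trans h2.symm).dvd
        have h5 : (K j - 1) - (K i - 1) = q*(j-i) := by simp only [hKdef]; ring
        rwa [h5] at h4
      exact hnd (j-i) (by omega) h3
    have hsel : ∃ i : ℤ, 0 ≤ i ∧ i ≤ 2 ∧ ¬ Int.ModEq ((p:ℤ)+1) (K i - 1) s ∧
        ¬ Int.ModEq ((p:ℤ)+1) (K i - 1) (-s) := by
      by_contra hcon
      push_neg at hcon
      have hbad : ∀ i : ℤ, 0 ≤ i → i ≤ 2 →
          Int.ModEq ((p:ℤ)+1) (K i - 1) s ∨ Int.ModEq ((p:ℤ)+1) (K i - 1) (-s) := by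
        intro i hA hB
        by_cases hP : Int.ModEq ((p:ℤ)+1) (K i - 1) s
        · exact Or.inl hP
        · exact Or.inr (hcon i hA hB hP)
      rcases hbad 0 (by norm_num) (by norm_num) with h0 | h0 <;>
      rcases hbad 1 (by norm_num) (by norm_num) with h1 | h1 <;>
      rcases hbad 2 (by norm_num) (by norm_num) with h2 | h2
      · exact hpair 0 1 s (by norm_num) (by norm_num) h0 h1
      · exact hpair 0 1 s (by norm_num) (by norm_num) h0 h1
      · exact hpair 0 2 s (by norm_num) (by norm_num) h0 h2
      · exact hpair 1 2 (-s) (by norm_num) (by norm_num) h1 h2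
      · exact hpair 1 2 s (by norm_num) (by norm_num) h1 h2
      · exact hpair 0 2 (-s) (by norm_num) (by norm_num) h0 h2
      · exact hpair 0 1 (-s) (by norm_num) (by norm_num) h0 h1
      · exact hpair 0 1 (-s) (by norm_num) (by norm_num) h0 h1
    obtain ⟨i, hi0, hi2, hns, hnn⟩ := hsel
    have hi0' : (0:ℝ) ≤ ((i:ℤ):ℝ) := by exact_mod_cast hi0
    have hi2' : ((i:ℤ):ℝ) ≤ 2 := by exact_mod_cast hi2
    have hqi0 : (0:ℝ) ≤ ((q:ℤ):ℝ)*((i:ℤ):ℝ) := mul_nonneg hq0.le hi0'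
    have hqi2 : ((q:ℤ):ℝ)*((i:ℤ):ℝ) ≤ ((q:ℤ):ℝ)*2 := mul_le_mul_of_nonneg_left hi2' hq0.le
    have hKcast : ((K i : ℤ):ℝ) = (k:ℝ) + ((q:ℤ):ℝ)*(((t₀:ℤ):ℝ) + ((i:ℤ):ℝ)) := by
      simp only [hKdef]; push_cast; ring
    have hKgt : 2*h + 2 < ((K i : ℤ):ℝ) := by rw [hKcast]; linarith [hlow, hqi0]
    have hceil2 : h ≤ ((⌈h⌉:ℤ):ℝ) := Int.le_ceil h
    have hmulceil : ((p:ℝ)-1)*h ≤ ((p:ℝ)-1)*((⌈h⌉:ℤ):ℝ) :=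
      mul_le_mul_of_nonneg_left hceil2 hP1.le
    have hKlt : ((K i : ℤ):ℝ) < ((p:ℝ)-1)*((⌈h⌉:ℤ):ℝ) + 2 := by
      rw [hKcast]; linarith [hhigh, h3q, hqi2, hmulceil]
    refine ⟨K i, ?_, ?_⟩
    · simp only [Xset, Set.mem_setOf_eq]
      refine ⟨?_, hns, hnn, ?_, ?_⟩
      · have hdv : ((p:ℤ)-1) ∣ k - K i :=
          ⟨-((p:ℤ)^N*(t₀+i)), by simp only [hKdef, hqdef]; ring⟩
        exact Int.modEq_iff_dvd.mpr hdv
      · have hx2 : (((K i : ℤ):ℝ) - 2)/((p:ℝ)-1) < ((⌈h⌉:ℤ):ℝ) :=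
          (div_lt_iff₀ hP1).mpr (by linarith [hKlt])
        have hx3 : ⌊(((K i : ℤ):ℝ) - 2)/((p:ℝ)-1)⌋ < ⌈h⌉ := Int.floor_lt.mpr hx2
        have hx4 : ((⌊(((K i : ℤ):ℝ) - 2)/((p:ℝ)-1)⌋ : ℤ):ℝ) ≤ ((⌈h⌉:ℤ):ℝ) - 1 := by
          have hx4' : ⌊(((K i : ℤ):ℝ) - 2)/((p:ℝ)-1)⌋ ≤ ⌈h⌉ - 1 := by omega
          exact_mod_cast hx4'
        have hx5 : ((⌈h⌉:ℤ):ℝ) < h + 1 := Int.ceil_lt_add_one h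
        linarith
      · rw [lt_div_iff₀ (by norm_num : (0:ℝ) < 2)]
        linarith
    · exact ⟨((p:ℤ)-1)*(t₀+i), by simp only [hKdef, hqdef]; ring⟩
  · rcases Set.eq_empty_or_nonempty (Xset p k s h) with he | ⟨k', hk'⟩
    · exact Or.inl he
    · refine Or.inr ⟨k', hk', ?_⟩
      have hmp0 : mp p h = 0 := by unfold mp; rw [if_neg hstar]
      simp [hmp0]
end

section
/- Let p > 3 be a prime, let t ≥ 0 be an integer, and let k, s, m, M be integers with M ≥ 3·p^t. Then there exists an integer i with 0 ≤ i < M such that the integer k' := k + (m+i)(p−1) satisfies: p^t divides k' − k, k' − 1 ≢ s (mod p+1), and k' − 1 ≢ −s (mod p+1). -/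
/-- Let `p > 3` be prime, `t ≥ 0`, and `k, s, m, M` integers with
`M ≥ 3·p^t`. Then there is an integer `i` with `0 ≤ i < M` such that
`k' = k + (m+i)(p−1)` satisfies `p^t ∣ (k' − k)`, `k' − 1 ≢ s (mod p+1)` and
`k' − 1 ≢ −s (mod p+1)`. -/
theorem exists_index_avoiding_residues (p : ℕ) (hp : p.Prime) (hp3 : 3 < p)
    (t : ℕ) (k s m M : ℤ) (hM : 3 * (p : ℤ) ^ t ≤ M) :
    ∃ i : ℤ, 0 ≤ i ∧ i < M ∧
      (p : ℤ) ^ t ∣ ((k + (m + i) * ((p : ℤ) - 1)) - k) ∧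
      ¬ Int.ModEq ((p : ℤ) + 1) ((k + (m + i) * ((p : ℤ) - 1)) - 1) s ∧
      ¬ Int.ModEq ((p : ℤ) + 1) ((k + (m + i) * ((p : ℤ) - 1)) - 1) (-s) := by
  have hp5 : (4 : ℤ) ≤ (p : ℤ) := by have : 4 ≤ p := hp3; exact_mod_cast this
  set q : ℤ := (p : ℤ) ^ t with hq_def
  have hq : 0 < q := pow_pos (by linarith) t
  set r : ℤ := (-m) % q with hr_def
  have hr0 : 0 ≤ r := Int.emod_nonneg _ (ne_of_gt hq)
  have hrq : r < q := Int.emod_lt_of_pos _ hq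
  have hdvd : q ∣ m + r := by
    have : m + r = -(q * ((-m) / q)) := by
      rw [hr_def, Int.emod_def]; ring
    rw [this]
    exact (dvd_mul_right q _).neg_right
  -- coprimality facts
  have hcop : IsCoprime ((p : ℤ) + 1) q := by
    have : IsCoprime ((p : ℤ) + 1) (p : ℤ) :=
      ⟨1, -1, by ring⟩
    exact this.pow_right
  have key : ∀ d : ℤ, d = 1 ∨ d = 2 → ¬ ((p : ℤ) + 1) ∣ d * (q * ((p : ℤ) - 1)) := by
    intro d hd hdvd'
    have h1 : ((p : ℤ) + 1) ∣ q * (d * ((p : ℤ) - 1)) := by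
      have : d * (q * ((p : ℤ) - 1)) = q * (d * ((p : ℤ) - 1)) := by ring
      rwa [this] at hdvd'
    have h2 : ((p : ℤ) + 1) ∣ d * ((p : ℤ) - 1) := hcop.dvd_of_dvd_mul_left h1
    have h3 : ((p : ℤ) + 1) ∣ d * ((p : ℤ) - 1) - d * ((p : ℤ) + 1) := by
      exact dvd_sub h2 (Dvd.intro_left d rfl)
    have h4 : d * ((p : ℤ) - 1) - d * ((p : ℤ) + 1) = -(2 * d) := by ring
    rw [h4, dvd_neg] at h3
    have h5 : (p : ℤ) + 1 ≤ 2 * d := Int.le_of_dvd (by rcases hd with rfl | rfl <;> norm_num) h3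
    rcases hd with rfl | rfl <;> linarith
  -- the three candidates
  by_contra hcon
  push_neg at hcon
  have bad : ∀ j : ℤ, 0 ≤ j → j < 3 →
      Int.ModEq ((p : ℤ) + 1) ((k + (m + (r + j * q)) * ((p : ℤ) - 1)) - 1) s ∨
      Int.ModEq ((p : ℤ) + 1) ((k + (m + (r + j * q)) * ((p : ℤ) - 1)) - 1) (-s) := by
    intro j hj0 hj3
    have hi0 : 0 ≤ r + j * q := by nlinarith
    have hiM : r + j * q < M := by nlinarith
    have hdvd2 : q ∣ ((k + (m + (r + j * q)) * ((p : ℤ) - 1)) - k) := by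
      have : (k + (m + (r + j * q)) * ((p : ℤ) - 1)) - k
          = ((m + r) + j * q) * ((p : ℤ) - 1) := by ring
      rw [this]
      exact Dvd.dvd.mul_right (dvd_add hdvd (Dvd.intro_left j rfl)) _
    have := hcon (r + j * q) hi0 hiM hdvd2
    by_cases h1 : Int.ModEq ((p : ℤ) + 1) ((k + (m + (r + j * q)) * ((p : ℤ) - 1)) - 1) s
    · exact Or.inl h1
    · exact Or.inr (this h1)
  have b0 := bad 0 (by norm_num) (by norm_num)
  have b1 := bad 1 (by norm_num) (by norm_num)
  have b2 := bad 2 (by norm_num) (by norm_num)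
  -- helper: matched pair gives contradiction
  have pair : ∀ (j j' c : ℤ), (j' - j = 1 ∨ j' - j = 2) →
      Int.ModEq ((p : ℤ) + 1) ((k + (m + (r + j * q)) * ((p : ℤ) - 1)) - 1) c →
      Int.ModEq ((p : ℤ) + 1) ((k + (m + (r + j' * q)) * ((p : ℤ) - 1)) - 1) c →
      False := by
    intro j j' c hjj h1 h2
    have h3 : ((p : ℤ) + 1) ∣
        ((k + (m + (r + j' * q)) * ((p : ℤ) - 1)) - 1)
          - ((k + (m + (r + j * q)) * ((p : ℤ) - 1)) - 1) :=
      (h2.trans h1.symm).symm.dvd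
    have h4 : ((k + (m + (r + j' * q)) * ((p : ℤ) - 1)) - 1)
          - ((k + (m + (r + j * q)) * ((p : ℤ) - 1)) - 1)
        = (j' - j) * (q * ((p : ℤ) - 1)) := by ring
    rw [h4] at h3
    exact key (j' - j) hjj h3
  rcases b0 with h0 | h0 <;> rcases b1 with h1 | h1 <;> rcases b2 with h2 | h2
  · exact pair 0 1 s (by norm_num) h0 h1
  · exact pair 0 1 s (by norm_num) h0 h1
  · exact pair 0 2 s (by norm_num) h0 h2
  · exact pair 1 2 (-s) (by norm_num) h1 h2
  · exact pair 1 2 s (by norm_num) h1 h2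
  · exact pair 0 2 (-s) (by norm_num) h0 h2
  · exact pair 0 1 (-s) (by norm_num) h0 h1
  · exact pair 0 1 (-s) (by norm_num) h0 h1
end

section
/- (Arithmetic core of Theorem 7.6.) Let p > 3 be a prime, let k and s be integers, and let h > 0 be a real number satisfying condition (★), i.e. (⌈(p−3)h⌉ − 1)/(3(p−1)) ≥ 1. Then there exists an integer k' ≥ 2 such that: (a) k' ≡ k (mod (p−1)·p^{⌊m_p(h)⌋}); (b) k'−1 ≢ s (mod p+1) and k'−1 ≢ −s (mod p+1); and (c) ⌊(k'−2)/(p−1)⌋ < h < (k'−2)/2. -/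
/-- **arithmetic core of Theorem 7.6.** Let `p > 3` be prime, `k, s` integers,
and `h > 0` a real satisfying (★). Then there is an integer `k' ≥ 2` with
(a) `k' ≡ k (mod (p−1)p^⌊m_p(h)⌋)`, (b) `k'−1 ≢ ±s (mod p+1)`, and
(c) `⌊(k'−2)/(p−1)⌋ < h < (k'−2)/2`. -/
theorem exists_weight_with_deep_congruence (p : ℕ) (hp : p.Prime) (hp3 : 3 < p)
    (k s : ℤ) (h : ℝ) (hh : 0 < h)
    (hstar : 1 ≤ ((⌈((p : ℝ) - 3) * h⌉ : ℝ) - 1) / (3 * ((p : ℝ) - 1))) :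
    ∃ k' : ℤ, 2 ≤ k' ∧
      Int.ModEq (((p : ℤ) - 1) * (p : ℤ) ^ (⌊mp p h⌋.toNat)) k' k ∧
      ¬ Int.ModEq ((p : ℤ) + 1) (k' - 1) s ∧
      ¬ Int.ModEq ((p : ℤ) + 1) (k' - 1) (-s) ∧
      ((⌊((k' : ℝ) - 2) / ((p : ℝ) - 1)⌋ : ℝ) < h ∧ h < ((k' : ℝ) - 2) / 2) := by
  have hp1 : (1:ℝ) < (p:ℝ) := by exact_mod_cast (by omega : 1 < p)
  set r : ℝ := ((⌈((p : ℝ) - 3) * h⌉ : ℝ) - 1) / (3 * ((p : ℝ) - 1)) with hr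
  have hmp : mp p h = Real.logb p r := by rw [mp, if_pos hstar]
  set M : ℕ := ⌊mp p h⌋.toNat with hM
  have hr0 : 0 < r := lt_of_lt_of_le one_pos hstar
  have hlog0 : 0 ≤ Real.logb p r := Real.logb_nonneg hp1 hstar
  -- p^M ≤ r
  have hMle : (M : ℝ) ≤ Real.logb p r := by
    have h1 : (⌊mp p h⌋.toNat : ℤ) = ⌊mp p h⌋ :=
      Int.toNat_of_nonneg (Int.floor_nonneg.mpr (by rw [hmp]; exact hlog0))
    have h2 : ((M:ℕ) : ℝ) = ((⌊mp p h⌋ : ℤ) : ℝ) := by rw [hM]; exact_mod_cast congrArg Int.cast h1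
    rw [h2, ← hmp]
    exact Int.floor_le _
  have hpM : ((p:ℝ))^M ≤ r := by
    have h1 : ((p:ℝ))^M = (p:ℝ) ^ ((M:ℕ):ℝ) := (Real.rpow_natCast _ _).symm
    have h2 : (p:ℝ) ^ ((M:ℕ):ℝ) ≤ (p:ℝ) ^ (Real.logb p r) :=
      Real.rpow_le_rpow_of_exponent_le hp1.le hMle
    have h3 : (p:ℝ) ^ (Real.logb p r) = r :=
      Real.rpow_logb (lt_trans one_pos hp1) (ne_of_gt hp1) hr0
    linarith
  -- key integer inequality
  have hkeyR : 3 * ((p:ℝ) - 1) * (p:ℝ)^M ≤ (⌈((p : ℝ) - 3) * h⌉ : ℝ) - 1 := by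
    have hpos : (0:ℝ) < 3 * ((p:ℝ) - 1) := by nlinarith
    have := mul_le_mul_of_nonneg_left hpM hpos.le
    have hne : (3 * ((p:ℝ) - 1)) ≠ 0 := ne_of_gt hpos
    rw [hr] at this
    calc 3 * ((p:ℝ) - 1) * (p:ℝ)^M ≤ 3 * ((p:ℝ) - 1) *
        (((⌈((p : ℝ) - 3) * h⌉ : ℝ) - 1) / (3 * ((p : ℝ) - 1))) := this
      _ = (⌈((p : ℝ) - 3) * h⌉ : ℝ) - 1 := by field_simp [(by linarith : (0:ℝ) < (p:ℝ) - 1).ne']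
  have hkey : 3 * (((p:ℤ) - 1) * (p:ℤ)^M) ≤ ⌈((p : ℝ) - 3) * h⌉ - 1 := by
    have : ((3 * (((p:ℤ) - 1) * (p:ℤ)^M) : ℤ) : ℝ) ≤ ((⌈((p : ℝ) - 3) * h⌉ - 1 : ℤ) : ℝ) := by
      push_cast; linarith
    exact_mod_cast this
  set N : ℤ := ((p:ℤ) - 1) * (p:ℤ)^M with hN
  have hN0 : 0 < N := by
    apply mul_pos
    · have : (3:ℤ) < (p:ℤ) := by exact_mod_cast hp3
      omega
    · positivity
  set a : ℤ := ⌊2*h⌋ + 3 with ha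
  have ha3 : 3 ≤ a := by
    have : 0 ≤ ⌊2*h⌋ := Int.floor_nonneg.mpr (by positivity)
    omega
  set k0 : ℤ := a + (k - a) % N with hk0
  have hmod0 : 0 ≤ (k - a) % N := Int.emod_nonneg _ (ne_of_gt hN0)
  have hmodN : (k - a) % N < N := Int.emod_lt_of_pos _ hN0
  -- ModEq for candidates
  have hcand : ∀ i : ℤ, Int.ModEq N (k0 + i * N) k := by
    intro i
    rw [Int.modEq_iff_dvd]
    have hdvd1 : N ∣ (k - a) - (k - a) % N :=
      ⟨(k - a) / N, by have := Int.mul_ediv_add_emod (k - a) N; linarith⟩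
    have : k - (k0 + i * N) = ((k - a) - (k - a) % N) + (-i) * N := by rw [hk0]; ring
    rw [this]
    exact dvd_add hdvd1 (Dvd.intro_left _ rfl)
  -- numeric goodness for any k' in the window
  have good : ∀ k' : ℤ, a ≤ k' → k' ≤ a + 3 * N - 1 →
      2 ≤ k' ∧ ((⌊((k' : ℝ) - 2) / ((p : ℝ) - 1)⌋ : ℝ) < h ∧ h < ((k' : ℝ) - 2) / 2) := by
    intro k' hlo hhi
    have h2k : 2 ≤ k' := by omega
    have hloR : (a:ℝ) ≤ (k':ℝ) := by exact_mod_cast hlo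
    have hhiR : (k':ℝ) ≤ (a:ℝ) + 3 * (N:ℝ) - 1 := by
      have : ((k':ℤ):ℝ) ≤ ((a + 3*N - 1 : ℤ) : ℝ) := by exact_mod_cast hhi
      push_cast at this ⊢; linarith
    have haR : (a:ℝ) = (⌊2*h⌋ : ℝ) + 3 := by rw [ha]; push_cast; ring
    have hfl1 : 2*h - 1 < (⌊2*h⌋ : ℝ) := Int.sub_one_lt_floor _
    have hfl2 : (⌊2*h⌋ : ℝ) ≤ 2*h := Int.floor_le _
    -- lower bound: 2h < k' - 2
    have hlow : 2*h < (k':ℝ) - 2 := by rw [haR] at hloR; linarith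
    -- upper bound: k' - 2 < (p-1)h
    have hceil : (⌈((p : ℝ) - 3) * h⌉ : ℝ) < ((p:ℝ) - 3) * h + 1 := Int.ceil_lt_add_one _
    have hNR : 3 * (N:ℝ) ≤ (⌈((p : ℝ) - 3) * h⌉ : ℝ) - 1 := by
      have : ((3 * N : ℤ):ℝ) ≤ ((⌈((p : ℝ) - 3) * h⌉ - 1 : ℤ):ℝ) := by
        exact_mod_cast (by linarith [hkey] : 3 * N ≤ ⌈((p : ℝ) - 3) * h⌉ - 1)
      push_cast at this; linarith
    have hup : (k':ℝ) - 2 < ((p:ℝ) - 1) * h := by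
      rw [haR] at hhiR; nlinarith
    refine ⟨h2k, ?_, by linarith⟩
    have hpos : (0:ℝ) < (p:ℝ) - 1 := by linarith
    have hdiv : ((k':ℝ) - 2) / ((p:ℝ) - 1) < h := by
      rw [div_lt_iff₀ hpos]; nlinarith
    exact lt_of_le_of_lt (Int.floor_le _) hdiv
  -- avoid forbidden residues mod q = p+1
  set q : ℤ := (p:ℤ) + 1 with hq
  have hq5 : 5 ≤ q := by
    have : (3:ℤ) < (p:ℤ) := by exact_mod_cast hp3
    omega
  have hq2N : ¬ (q ∣ 2 * N) := by
    intro hd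
    have hcp : IsCoprime q ((p:ℤ)) := ⟨1, -1, by rw [hq]; ring⟩
    have hcop : IsCoprime q ((p:ℤ)^M) := hcp.pow_right
    have hd2 : q ∣ (2 * ((p:ℤ) - 1)) * (p:ℤ)^M := by
      have e : (2 * ((p:ℤ) - 1)) * (p:ℤ)^M = 2 * N := by rw [hN]; ring
      rw [e]; exact hd
    have hd3 : q ∣ 2 * ((p:ℤ) - 1) := hcop.dvd_of_dvd_mul_right hd2
    have hd4 : q ∣ (4:ℤ) := by
      have : (4:ℤ) = 2 * q - 2 * ((p:ℤ) - 1) := by rw [hq]; ring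
      rw [this]
      exact dvd_sub (Dvd.intro 2 (by ring)) hd3
    have := Int.le_of_dvd (by norm_num) hd4
    omega
  have hqN : ¬ (q ∣ N) := fun hd => hq2N (Dvd.dvd.mul_left hd 2)
  have key : ∀ t x y : ℤ, Int.ModEq q (x - 1) t → Int.ModEq q (y - 1) t → q ∣ y - x := by
    intro t x y h1 h2
    have := (h1.trans h2.symm).dvd
    have e : (y - 1) - (x - 1) = y - x := by ring
    rwa [e] at this
  -- choose among three candidates
  by_cases c0 : ¬ Int.ModEq q (k0 - 1) s ∧ ¬ Int.ModEq q (k0 - 1) (-s)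
  · exact ⟨k0, (good k0 (by omega) (by omega)).1, by simpa using hcand 0, c0.1, c0.2,
      (good k0 (by omega) (by omega)).2⟩
  · by_cases c1 : ¬ Int.ModEq q (k0 + N - 1) s ∧ ¬ Int.ModEq q (k0 + N - 1) (-s)
    · exact ⟨k0 + N, (good _ (by omega) (by omega)).1, by simpa using hcand 1, c1.1, c1.2,
        (good _ (by omega) (by omega)).2⟩
    · by_cases c2 : ¬ Int.ModEq q (k0 + 2*N - 1) s ∧ ¬ Int.ModEq q (k0 + 2*N - 1) (-s)
      · exact ⟨k0 + 2*N, (good _ (by omega) (by omega)).1, by simpa using hcand 2, c2.1, c2.2,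
          (good _ (by omega) (by omega)).2⟩
      · exfalso
        rw [not_and_or, not_not, not_not] at c0 c1 c2
        have hNsub1 : (k0 + N) - k0 = N := by ring
        have hNsub2 : (k0 + 2*N) - k0 = 2*N := by ring
        have hNsub3 : (k0 + 2*N) - (k0 + N) = N := by ring
        rcases c0 with A0 | B0 <;> rcases c1 with A1 | B1 <;> rcases c2 with A2 | B2
        · exact hqN (by have := key s k0 (k0+N) A0 A1; rwa [hNsub1] at this)
        · exact hqN (by have := key s k0 (k0+N) A0 A1; rwa [hNsub1] at this)
        · exact hq2N (by have := key s k0 (k0+2*N) A0 A2; rwa [hNsub2] at this)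
        · exact hqN (by have := key (-s) (k0+N) (k0+2*N) B1 B2; rwa [hNsub3] at this)
        · exact hqN (by have := key s (k0+N) (k0+2*N) A1 A2; rwa [hNsub3] at this)
        · exact hq2N (by have := key (-s) k0 (k0+2*N) B0 B2; rwa [hNsub2] at this)
        · exact hqN (by have := key (-s) k0 (k0+N) B0 B1; rwa [hNsub1] at this)
        · exact hqN (by have := key (-s) k0 (k0+N) B0 B1; rwa [hNsub1] at this)
end

section
/- Let λ ≥ 1 be an integer and let c be a formal power series in ℤ₂[[w]] lying in the λ-th power of the ideal (8, w) of ℤ₂[[w]]. Let w₀ ∈ ℤ₂ with v₂(w₀) ≥ 3. Then the formal derivative c' = dc/dw, evaluated at w₀ (the evaluation converges since the coefficients of c' lie in ℤ₂ and v₂(w₀) > 0), satisfies v₂(c'(w₀)) ≥ 3(λ − 1); equivalently ‖c'(w₀)‖₂ ≤ 2^{−3(λ−1)}. -/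
open PowerSeries

private lemma norm8 : ‖(8 : ℤ_[2])‖ = (2:ℝ) ^ (-3 : ℤ) := by
  have h2 : ‖(2 : ℤ_[2])‖ = 2⁻¹ := by
    simpa using PadicInt.norm_p (p := 2)
  have : (8 : ℤ_[2]) = (2 : ℤ_[2]) ^ 3 := by norm_num
  rw [this, norm_pow, h2]
  norm_num

/-- Ultrametric bound for coefficients of a product, given a bound on one factor. -/
private lemma coeff_mul_bound (a p : PowerSeries ℤ_[2]) (t : ℤ)
    (ha : ∀ j : ℕ, ‖coeff (R := ℤ_[2]) j a‖ ≤ (2:ℝ) ^ (3 * (j:ℤ) - t)) (k : ℕ) :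
    ‖coeff (R := ℤ_[2]) k (a * p)‖ ≤ (2:ℝ) ^ (3 * (k:ℤ) - t) := by
  rw [coeff_mul]
  refine IsUltrametricDist.norm_sum_le_of_forall_le_of_nonneg (by positivity) ?_
  rintro ⟨i, j⟩ hij
  have hik : i ≤ k := by
    have := Finset.HasAntidiagonal.antidiagonal.fst_le hij
    simpa using this
  calc ‖coeff (R := ℤ_[2]) i a * coeff (R := ℤ_[2]) j p‖
      ≤ ‖coeff (R := ℤ_[2]) i a‖ * ‖coeff (R := ℤ_[2]) j p‖ := norm_mul_le _ _
    _ ≤ ((2:ℝ) ^ (3 * (i:ℤ) - t)) * 1 := by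
        apply mul_le_mul (ha i) (PadicInt.norm_le_one _) (norm_nonneg _) (by positivity)
    _ = (2:ℝ) ^ (3 * (i:ℤ) - t) := mul_one _
    _ ≤ (2:ℝ) ^ (3 * (k:ℤ) - t) := by
        apply zpow_le_zpow_right₀ (by norm_num)
        omega

private lemma coeff_pow_bound (m : ℕ) (c : PowerSeries ℤ_[2])
    (hc : c ∈ (Ideal.span {(8 : PowerSeries ℤ_[2]), (PowerSeries.X : PowerSeries ℤ_[2])}) ^ m) :
    ∀ k : ℕ, ‖coeff (R := ℤ_[2]) k c‖ ≤ (2:ℝ) ^ (3 * (k:ℤ) - 3 * m) := by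
  induction m generalizing c with
  | zero =>
    intro k
    calc ‖coeff (R := ℤ_[2]) k c‖ ≤ 1 := PadicInt.norm_le_one _
      _ ≤ (2:ℝ) ^ (3 * (k:ℤ) - 3 * (0:ℕ)) := by
          apply one_le_zpow₀ (by norm_num)
          omega
  | succ m ih =>
    rw [pow_succ] at hc
    refine Submodule.mul_induction_on hc ?_ ?_
    · intro a ha b hb k
      rw [Ideal.mem_span_pair] at hb
      obtain ⟨p, q, rfl⟩ := hb
      have h8 : (8 : PowerSeries ℤ_[2]) = C (R := ℤ_[2]) 8 := by
        simp [map_ofNat]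
      have key : a * (p * 8 + q * X) = (a * p) * C (R := ℤ_[2]) 8 + (a * q) * X := by
        rw [← h8]; ring
      rw [key, map_add]
      have h1 : ‖coeff (R := ℤ_[2]) k ((a * p) * C (R := ℤ_[2]) 8)‖ ≤ (2:ℝ) ^ (3 * (k:ℤ) - 3 * (m+1:ℕ)) := by
        rw [coeff_mul_C, norm_mul, norm8]
        calc ‖coeff (R := ℤ_[2]) k (a * p)‖ * (2:ℝ) ^ (-3:ℤ)
            ≤ (2:ℝ) ^ (3 * (k:ℤ) - 3 * m) * (2:ℝ) ^ (-3:ℤ) := by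
              apply mul_le_mul_of_nonneg_right (coeff_mul_bound a p _ (ih a ha) k)
                (by positivity)
          _ = (2:ℝ) ^ (3 * (k:ℤ) - 3 * (m+1:ℕ)) := by
              rw [← zpow_add₀ (by norm_num : (2:ℝ) ≠ 0)]
              congr 1
              push_cast
              ring
      have h2 : ‖coeff (R := ℤ_[2]) k ((a * q) * X)‖ ≤ (2:ℝ) ^ (3 * (k:ℤ) - 3 * (m+1:ℕ)) := by
        cases k with
        | zero => simp [coeff_zero_mul_X]; positivity
        | succ j =>
          rw [coeff_succ_mul_X]
          calc ‖coeff (R := ℤ_[2]) j (a * q)‖ ≤ (2:ℝ) ^ (3 * (j:ℤ) - 3 * m) :=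
              coeff_mul_bound a q _ (ih a ha) j
            _ ≤ (2:ℝ) ^ (3 * ((j+1:ℕ):ℤ) - 3 * (m+1:ℕ)) := by
              apply zpow_le_zpow_right₀ (by norm_num)
              push_cast
              omega
      exact (IsUltrametricDist.norm_add_le_max _ _).trans (max_le h1 h2)
    · intro x y hx hy k
      exact (IsUltrametricDist.norm_add_le_max _ _).trans (max_le (hx k) (hy k))

/-- **Buzzard–Kilford estimate, equation (18).** Let `λ ≥ 1` and let
`c ∈ ℤ₂[[w]]` lie in the `λ`-th power of the ideal `(8, w)`. Let `w₀ ∈ ℤ₂` with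
`v₂(w₀) ≥ 3` (i.e. `‖w₀‖₂ ≤ 2⁻³`). Then the formal derivative `c' = dc/dw`, evaluated at
`w₀` via the convergent series `∑ coeff n (c') · w₀ⁿ`, satisfies
`v₂(c'(w₀)) ≥ 3(λ−1)`, i.e. `‖c'(w₀)‖₂ ≤ 2^{−3(λ−1)}`. -/
theorem derivative_valuation_lower_bound (lam : ℕ) (hlam : 1 ≤ lam)
    (c : PowerSeries ℤ_[2])
    (hc : c ∈ (Ideal.span {(8 : PowerSeries ℤ_[2]), (PowerSeries.X : PowerSeries ℤ_[2])}) ^ lam)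
    (w₀ : ℤ_[2]) (hw₀ : ‖w₀‖ ≤ (2 : ℝ) ^ (-3 : ℤ)) :
    ‖∑' n : ℕ, (PowerSeries.coeff (R := ℤ_[2]) n (PowerSeries.derivative ℤ_[2] c)) * w₀ ^ n‖
      ≤ (2 : ℝ) ^ (-(3 * ((lam : ℤ) - 1))) := by
  apply IsUltrametricDist.norm_tsum_le_of_forall_le_of_nonneg (by positivity)
  intro n
  have hcoeff : ‖coeff (R := ℤ_[2]) n (PowerSeries.derivative ℤ_[2] c)‖
      ≤ (2:ℝ) ^ (3 * ((n:ℤ)+1) - 3 * lam) := by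
    rw [PowerSeries.coeff_derivative]
    calc ‖coeff (R := ℤ_[2]) (n+1) c * ((n:ℤ_[2])+1)‖
        ≤ ‖coeff (R := ℤ_[2]) (n+1) c‖ * ‖((n:ℤ_[2])+1)‖ := norm_mul_le _ _
      _ ≤ ‖coeff (R := ℤ_[2]) (n+1) c‖ * 1 :=
          mul_le_mul_of_nonneg_left (PadicInt.norm_le_one _) (norm_nonneg _)
      _ = ‖coeff (R := ℤ_[2]) (n+1) c‖ := mul_one _
      _ ≤ (2:ℝ) ^ (3 * ((n+1:ℕ):ℤ) - 3 * lam) := coeff_pow_bound lam c hc (n+1)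
      _ = (2:ℝ) ^ (3 * ((n:ℤ)+1) - 3 * lam) := by push_cast; ring_nf
  have hwpow : ‖w₀ ^ n‖ ≤ (2:ℝ) ^ (-3 * (n:ℤ)) := by
    calc ‖w₀ ^ n‖ ≤ ((2:ℝ) ^ (-3:ℤ)) ^ n := by
          rw [norm_pow]
          exact pow_le_pow_left₀ (norm_nonneg _) hw₀ n
      _ = (2:ℝ) ^ (-3 * (n:ℤ)) := by
          rw [← zpow_natCast ((2:ℝ) ^ (-3:ℤ)), ← zpow_mul]
  calc ‖coeff (R := ℤ_[2]) n (PowerSeries.derivative ℤ_[2] c) * w₀ ^ n‖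
      ≤ ‖coeff (R := ℤ_[2]) n (PowerSeries.derivative ℤ_[2] c)‖ * ‖w₀ ^ n‖ := norm_mul_le _ _
    _ ≤ (2:ℝ) ^ (3 * ((n:ℤ)+1) - 3 * lam) * (2:ℝ) ^ (-3 * (n:ℤ)) := by
        apply mul_le_mul hcoeff hwpow (norm_nonneg _) (by positivity)
    _ = (2:ℝ) ^ (3 * ((n:ℤ)+1) - 3 * lam + -3 * n) := by
        rw [← zpow_add₀ (by norm_num : (2:ℝ) ≠ 0)]
    _ ≤ (2:ℝ) ^ (-(3 * ((lam:ℤ) - 1))) := by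
        apply zpow_le_zpow_right₀ (by norm_num)
        omega
end
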